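/- Suppose A belongs to the class 𝒜. Then h_Φ^A(X) is a closed linear subspace of (l_Φ^A(X), ‖·‖_Φ^A) (hence itself a Banach space), and h_Φ^A(X) has the AK-property: for every x̄ = (x_k) ∈ h_Φ^A(X), the sections x̄^{[m]} = (x_1, …, x_m, 0, 0, …) converge to x̄ in the norm ‖·‖_Φ^A as m → ∞. -/

import Mathlib

open Filter Topology

/-- An Orlicz function: convex, nondecreasing, continuous on `[0,∞)`,
vanishing at `0`, positive on `(0,∞)`, tending to `∞` at `∞`. -/
structure IsOrliczFn (φ : ℝ → ℝ) : Prop where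
  convexOn : ConvexOn ℝ (Set.Ici (0 : ℝ)) φ
  monotoneOn : MonotoneOn φ (Set.Ici (0 : ℝ))
  continuousOn : ContinuousOn φ (Set.Ici (0 : ℝ))
  map_zero : φ 0 = 0
  pos : ∀ t : ℝ, 0 < t → 0 < φ t
  tendsto_atTop : Filter.Tendsto φ Filter.atTop Filter.atTop

/-- A Musielak-Orlicz function: a sequence of Orlicz functions. -/
def IsMusielakOrlicz (Φ : ℕ → ℝ → ℝ) : Prop := ∀ n, IsOrliczFn (Φ n)

/-- Condition δ₂ for a Musielak-Orlicz function. -/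
def MOCondDelta2 (Φ : ℕ → ℝ → ℝ) : Prop :=
  ∃ K > (0 : ℝ), ∃ δ > (0 : ℝ), ∃ c : ℕ → ℝ, (∀ n, 0 ≤ c n) ∧ Summable c ∧
    ∀ n : ℕ, ∀ x : ℝ, 0 ≤ x → Φ n x ≤ δ → Φ n (2 * x) ≤ K * Φ n x + c n

/-- Condition (*) for a Musielak-Orlicz function. -/
def MOCondStar (Φ : ℕ → ℝ → ℝ) : Prop :=
  ∀ ε : ℝ, ε ∈ Set.Ioo (0 : ℝ) 1 → ∃ δ > (0 : ℝ), ∀ n : ℕ, ∀ u : ℝ, 0 ≤ u →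
    Φ n u < 1 - ε → Φ n ((1 + δ) * u) ≤ 1

/-- The class 𝒜 of infinite matrices: every column is nonzero. -/
def MatrixClassA (a : ℕ → ℕ → ℝ) : Prop := ∀ k, ∃ n, a n k ≠ 0

/-- A triangle matrix: nonzero diagonal, zero above the diagonal. -/
def IsTriangle (a : ℕ → ℕ → ℝ) : Prop := (∀ n, a n n ≠ 0) ∧ ∀ n k, n < k → a n k = 0

/-- The `n`-th row sum `∑_k |a_{nk}| ‖x_k‖`. -/
noncomputable def rowSum {X : Type*} [NormedAddCommGroup X]
    (a : ℕ → ℕ → ℝ) (x : ℕ → X) (n : ℕ) : ℝ :=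
  ∑' k, |a n k| * ‖x k‖

/-- Membership in the generalized Musielak-Orlicz sequence space `l_Φ^A(X)`:
`x` is a bounded sequence whose row sums are finite and
`∑_n φ_n(rowSum_n / σ) < ∞` for some `σ > 0`. -/
def MemL {X : Type*} [NormedAddCommGroup X]
    (Φ : ℕ → ℝ → ℝ) (a : ℕ → ℕ → ℝ) (x : ℕ → X) : Prop :=
  (∃ C : ℝ, ∀ k, ‖x k‖ ≤ C) ∧ (∀ n, Summable fun k => |a n k| * ‖x k‖) ∧
    ∃ σ > (0 : ℝ), Summable fun n => Φ n (rowSum a x n / σ)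

/-- Membership in `h_Φ^A(X)`: as `MemL` but for every `σ > 0`. -/
def MemH {X : Type*} [NormedAddCommGroup X]
    (Φ : ℕ → ℝ → ℝ) (a : ℕ → ℕ → ℝ) (x : ℕ → X) : Prop :=
  (∃ C : ℝ, ∀ k, ‖x k‖ ≤ C) ∧ (∀ n, Summable fun k => |a n k| * ‖x k‖) ∧
    ∀ σ > (0 : ℝ), Summable fun n => Φ n (rowSum a x n / σ)

/-- The Luxemburg-type norm `‖x‖_Φ^A`. -/
noncomputable def ANorm {X : Type*} [NormedAddCommGroup X]
    (Φ : ℕ → ℝ → ℝ) (a : ℕ → ℕ → ℝ) (x : ℕ → X) : ℝ :=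
  sInf {σ : ℝ | 0 < σ ∧ (Summable fun n => Φ n (rowSum a x n / σ)) ∧
    (∑' n, Φ n (rowSum a x n / σ)) ≤ 1}

/-- The modular `ρ_Φ^A(x) = ∑_n φ_n(∑_k |a_{nk}| ‖x_k‖)`. -/
noncomputable def rhoA {X : Type*} [NormedAddCommGroup X]
    (Φ : ℕ → ℝ → ℝ) (a : ℕ → ℕ → ℝ) (x : ℕ → X) : ℝ :=
  ∑' n, Φ n (rowSum a x n)

/-- The `m`-th section of a sequence: first `m` coordinates kept, rest zero. -/
def sect {X : Type*} [Zero X] (x : ℕ → X) (m : ℕ) : ℕ → X :=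
  fun k => if k < m then x k else 0

section Aux

variable {X : Type*} [NormedAddCommGroup X]

private lemma orlicz_nonneg {φ : ℝ → ℝ} (hφ : IsOrliczFn φ) {t : ℝ} (ht : 0 ≤ t) :
    0 ≤ φ t := by
  have h := hφ.monotoneOn (Set.self_mem_Ici) (Set.mem_Ici.mpr ht) ht
  simpa [hφ.map_zero] using h

private lemma orlicz_smul_le {φ : ℝ → ℝ} (hφ : IsOrliczFn φ) {l t : ℝ}
    (hl0 : 0 ≤ l) (hl1 : l ≤ 1) (ht : 0 ≤ t) : φ (l * t) ≤ l * φ t := by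
  have h := hφ.convexOn.2 (Set.self_mem_Ici) (Set.mem_Ici.mpr ht)
    (by linarith : (0:ℝ) ≤ 1 - l) hl0 (by ring)
  simpa [hφ.map_zero, smul_eq_mul] using h

private lemma orlicz_split {φ : ℝ → ℝ} (hφ : IsOrliczFn φ) {u v s1 s2 : ℝ}
    (hu : 0 ≤ u) (hv : 0 ≤ v) (h1 : 0 < s1) (h2 : 0 < s2) :
    φ ((u + v) / (s1 + s2)) ≤ (s1/(s1+s2)) * φ (u/s1) + (s2/(s1+s2)) * φ (v/s2) := by
  have hs : 0 < s1 + s2 := by linarith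
  have h := hφ.convexOn.2 (Set.mem_Ici.mpr (div_nonneg hu h1.le))
    (Set.mem_Ici.mpr (div_nonneg hv h2.le))
    (div_nonneg h1.le hs.le) (div_nonneg h2.le hs.le)
    (by field_simp)
  have heq : (s1/(s1+s2)) • (u/s1) + (s2/(s1+s2)) • (v/s2) = (u+v)/(s1+s2) := by
    rw [smul_eq_mul, smul_eq_mul, div_mul_div_comm, div_mul_div_comm, mul_comm s1 u, mul_comm s2 v,
      mul_div_mul_right _ _ h1.ne', mul_div_mul_right _ _ h2.ne', ← add_div]
  rw [heq] at h
  simpa [smul_eq_mul] using h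

private lemma row_nonneg (a : ℕ → ℕ → ℝ) (x : ℕ → X) (n k : ℕ) :
    0 ≤ |a n k| * ‖x k‖ := mul_nonneg (abs_nonneg _) (norm_nonneg _)

private lemma rowSum_nonneg (a : ℕ → ℕ → ℝ) (x : ℕ → X) (n : ℕ) :
    0 ≤ rowSum a x n := tsum_nonneg (row_nonneg a x n)

private lemma row_add_le (a : ℕ → ℕ → ℝ) (x y : ℕ → X) (n k : ℕ) :
    |a n k| * ‖(x + y) k‖ ≤ |a n k| * ‖x k‖ + |a n k| * ‖y k‖ := by
  rw [Pi.add_apply, ← mul_add]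
  exact mul_le_mul_of_nonneg_left (norm_add_le _ _) (abs_nonneg _)

private lemma row_summable_add {a : ℕ → ℕ → ℝ} {x y : ℕ → X} {n : ℕ}
    (hx : Summable fun k => |a n k| * ‖x k‖) (hy : Summable fun k => |a n k| * ‖y k‖) :
    Summable fun k => |a n k| * ‖(x + y) k‖ :=
  Summable.of_nonneg_of_le (fun k => row_nonneg a (x+y) n k) (row_add_le a x y n) (hx.add hy)

private lemma rowSum_add_le {a : ℕ → ℕ → ℝ} {x y : ℕ → X} {n : ℕ}
    (hx : Summable fun k => |a n k| * ‖x k‖) (hy : Summable fun k => |a n k| * ‖y k‖) :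
    rowSum a (x + y) n ≤ rowSum a x n + rowSum a y n := by
  have h1 : rowSum a (x+y) n ≤ ∑' k, (|a n k| * ‖x k‖ + |a n k| * ‖y k‖) :=
    Summable.tsum_le_tsum (row_add_le a x y n) (row_summable_add hx hy) (hx.add hy)
  calc rowSum a (x+y) n ≤ _ := h1
    _ = rowSum a x n + rowSum a y n := Summable.tsum_add hx hy

private lemma row_summable_sub {a : ℕ → ℕ → ℝ} {x y : ℕ → X} {n : ℕ}
    (hx : Summable fun k => |a n k| * ‖x k‖) (hy : Summable fun k => |a n k| * ‖y k‖) :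
    Summable fun k => |a n k| * ‖(x - y) k‖ := by
  apply Summable.of_nonneg_of_le (fun k => row_nonneg a (x-y) n k)
    (fun k => ?_) (hx.add hy)
  rw [Pi.sub_apply, ← mul_add]
  exact mul_le_mul_of_nonneg_left (norm_sub_le _ _) (abs_nonneg _)

private lemma rowSum_sub_le {a : ℕ → ℕ → ℝ} {x y : ℕ → X} {n : ℕ}
    (hx : Summable fun k => |a n k| * ‖x k‖) (hy : Summable fun k => |a n k| * ‖y k‖) :
    rowSum a (x - y) n ≤ rowSum a x n + rowSum a y n := by
  have hb : ∀ k, |a n k| * ‖(x - y) k‖ ≤ |a n k| * ‖x k‖ + |a n k| * ‖y k‖ := by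
    intro k
    rw [Pi.sub_apply, ← mul_add]
    exact mul_le_mul_of_nonneg_left (norm_sub_le _ _) (abs_nonneg _)
  calc rowSum a (x - y) n ≤ ∑' k, (|a n k| * ‖x k‖ + |a n k| * ‖y k‖) :=
        Summable.tsum_le_tsum hb (row_summable_sub hx hy) (hx.add hy)
    _ = rowSum a x n + rowSum a y n := Summable.tsum_add hx hy

/-- Splitting the modular summability over two parameters. -/
private lemma summable_phi_of_le {Φ : ℕ → ℝ → ℝ} (hΦ : IsMusielakOrlicz Φ)
    {a : ℕ → ℕ → ℝ} {z x y : ℕ → X} {σ₁ σ₂ : ℝ} (h1 : 0 < σ₁) (h2 : 0 < σ₂)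
    (hle : ∀ n, rowSum a z n ≤ rowSum a x n + rowSum a y n)
    (hx : Summable fun n => Φ n (rowSum a x n / σ₁))
    (hy : Summable fun n => Φ n (rowSum a y n / σ₂)) :
    Summable fun n => Φ n (rowSum a z n / (σ₁ + σ₂)) := by
  have hs : 0 < σ₁ + σ₂ := by linarith
  have hbound : ∀ n, Φ n (rowSum a z n / (σ₁ + σ₂)) ≤
      (σ₁/(σ₁+σ₂)) * Φ n (rowSum a x n / σ₁) + (σ₂/(σ₁+σ₂)) * Φ n (rowSum a y n / σ₂) := by
    intro n
    have hmono : Φ n (rowSum a z n / (σ₁ + σ₂)) ≤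
        Φ n ((rowSum a x n + rowSum a y n) / (σ₁ + σ₂)) := by
      apply (hΦ n).monotoneOn
        (Set.mem_Ici.mpr (div_nonneg (rowSum_nonneg a z n) hs.le))
        (Set.mem_Ici.mpr (div_nonneg (add_nonneg (rowSum_nonneg a x n) (rowSum_nonneg a y n)) hs.le))
        (by gcongr; exact hle n)
    exact hmono.trans (orlicz_split (hΦ n) (rowSum_nonneg a x n) (rowSum_nonneg a y n) h1 h2)
  exact Summable.of_nonneg_of_le
    (fun n => orlicz_nonneg (hΦ n) (div_nonneg (rowSum_nonneg a z n) hs.le))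
    hbound ((hx.mul_left _).add (hy.mul_left _))

/-- The ANorm defining set is nonempty for members of `l_Φ^A`. -/
private lemma aset_nonempty {Φ : ℕ → ℝ → ℝ} (hΦ : IsMusielakOrlicz Φ)
    {a : ℕ → ℕ → ℝ} {z : ℕ → X} (hz : MemL Φ a z) :
    {σ : ℝ | 0 < σ ∧ (Summable fun n => Φ n (rowSum a z n / σ)) ∧
      (∑' n, Φ n (rowSum a z n / σ)) ≤ 1}.Nonempty := by
  obtain ⟨-, -, σ₀, hσ₀, hsum⟩ := hz
  set S := ∑' n, Φ n (rowSum a z n / σ₀) with hS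
  have hS0 : 0 ≤ S :=
    tsum_nonneg fun n => orlicz_nonneg (hΦ n) (div_nonneg (rowSum_nonneg a z n) hσ₀.le)
  set σ := σ₀ * (S + 1) with hσdef
  have hσpos : 0 < σ := mul_pos hσ₀ (by linarith)
  have hl0 : (0:ℝ) < 1 / (S + 1) := by positivity
  have hl1 : 1 / (S + 1) ≤ 1 := by
    rw [div_le_one (by linarith)]; linarith
  have hkey : ∀ n, Φ n (rowSum a z n / σ) ≤ (1/(S+1)) * Φ n (rowSum a z n / σ₀) := by
    intro n
    have heq : rowSum a z n / σ = (1/(S+1)) * (rowSum a z n / σ₀) := by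
      rw [hσdef]; field_simp
    rw [heq]
    exact orlicz_smul_le (hΦ n) hl0.le hl1 (div_nonneg (rowSum_nonneg a z n) hσ₀.le)
  have hsum' : Summable fun n => Φ n (rowSum a z n / σ) := by
    apply Summable.of_nonneg_of_le
      (fun n => orlicz_nonneg (hΦ n) (div_nonneg (rowSum_nonneg a z n) hσpos.le))
      hkey (hsum.mul_left _)
  refine ⟨σ, hσpos, hsum', ?_⟩
  calc (∑' n, Φ n (rowSum a z n / σ)) ≤ ∑' n, (1/(S+1)) * Φ n (rowSum a z n / σ₀) :=
        Summable.tsum_le_tsum hkey hsum' (hsum.mul_left _)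
    _ = (1/(S+1)) * S := by rw [tsum_mul_left]
    _ ≤ 1 := by rw [div_mul_eq_mul_div, one_mul, div_le_one (by linarith)]; linarith

end Aux

/-- if `A ∈ 𝒜`, then `h_Φ^A(X)` is a closed linear subspace of
`(l_Φ^A(X), ‖·‖_Φ^A)` and has the AK-property. -/
theorem hPhiA_closed_subspace_and_AK
    {X : Type*} [NormedAddCommGroup X] [NormedSpace ℝ X] [CompleteSpace X]
    (Φ : ℕ → ℝ → ℝ) (hΦ : IsMusielakOrlicz Φ)
    (a : ℕ → ℕ → ℝ) (hA : MatrixClassA a) :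
    (∀ x : ℕ → X, MemH Φ a x → MemL Φ a x) ∧
    (∀ x y : ℕ → X, MemH Φ a x → MemH Φ a y → MemH Φ a (x + y)) ∧
    (∀ (c : ℝ) (x : ℕ → X), MemH Φ a x → MemH Φ a (c • x)) ∧
    (∀ x : ℕ → X, MemL Φ a x →
      (∀ ε > (0 : ℝ), ∃ y : ℕ → X, MemH Φ a y ∧ ANorm Φ a (x - y) < ε) →
      MemH Φ a x) ∧
    (∀ x : ℕ → X, MemH Φ a x →
      Tendsto (fun m => ANorm Φ a (x - sect x m)) atTop (𝓝 0)) := by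
  refine ⟨?_, ?_, ?_, ?_, ?_⟩
  -- Part 1: MemH → MemL
  · rintro x ⟨hb, hs, hσ⟩
    exact ⟨hb, hs, 1, one_pos, hσ 1 one_pos⟩
  -- Part 2: closed under addition
  · rintro x y ⟨⟨Cx, hCx⟩, hsx, hx⟩ ⟨⟨Cy, hCy⟩, hsy, hy⟩
    refine ⟨⟨Cx + Cy, fun k => (norm_add_le _ _).trans (add_le_add (hCx k) (hCy k))⟩,
      fun n => row_summable_add (hsx n) (hsy n), fun σ hσ => ?_⟩
    have h2 : (0:ℝ) < σ/2 := by linarith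
    have := summable_phi_of_le hΦ h2 h2
      (fun n => rowSum_add_le (hsx n) (hsy n)) (hx (σ/2) h2) (hy (σ/2) h2)
    rwa [show σ/2 + σ/2 = σ from by ring] at this
  -- Part 3: closed under scalar multiplication
  · rintro c x ⟨⟨C, hC⟩, hs, hx⟩
    have hrow : ∀ n k, |a n k| * ‖(c • x) k‖ = |c| * (|a n k| * ‖x k‖) := by
      intro n k
      rw [Pi.smul_apply, norm_smul, Real.norm_eq_abs]
      ring
    have hrowSum : ∀ n, rowSum a (c • x) n = |c| * rowSum a x n := by
      intro n
      unfold rowSum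
      rw [← tsum_mul_left]
      exact tsum_congr fun k => hrow n k
    refine ⟨⟨|c| * C, fun k => ?_⟩, fun n => ?_, fun σ hσ => ?_⟩
    · rw [Pi.smul_apply, norm_smul, Real.norm_eq_abs]
      exact mul_le_mul_of_nonneg_left (hC k) (abs_nonneg c)
    · exact Summable.congr ((hs n).mul_left |c|) fun k => (hrow n k).symm
    · rcases eq_or_ne c 0 with rfl | hc
      · have hzero : ∀ n : ℕ, Φ n (rowSum a ((0:ℝ) • x) n / σ) = 0 := by
          intro n
          rw [hrowSum n]
          simp [(hΦ n).map_zero]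
        exact summable_zero.congr fun n => (hzero n).symm
      · have hcpos : 0 < |c| := abs_pos.mpr hc
        apply (hx (σ / |c|) (by positivity)).congr
        intro n
        congr 1
        rw [hrowSum n, div_div_eq_mul_div]
        ring
  -- Part 4: closedness of h in l
  · rintro x hxL hclose
    obtain ⟨⟨Cx, hCx⟩, hs, σ₁, hσ₁, hsum₁⟩ := hxL
    refine ⟨⟨Cx, hCx⟩, hs, fun σ hσ => ?_⟩
    obtain ⟨y, ⟨⟨Cy, hCy⟩, hsy, hy⟩, hyn⟩ := hclose (σ/2) (by linarith)
    -- the set defining ANorm (x - y) is nonempty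
    have hLxy : MemL Φ a (x - y) := by
      refine ⟨⟨Cx + Cy, fun k => (norm_sub_le _ _).trans (add_le_add (hCx k) (hCy k))⟩,
        fun n => row_summable_sub (hs n) (hsy n), σ₁ + σ₁, by linarith, ?_⟩
      exact summable_phi_of_le hΦ hσ₁ hσ₁
        (fun n => rowSum_sub_le (hs n) (hsy n)) hsum₁ (hy σ₁ hσ₁)
    have hne := aset_nonempty hΦ hLxy
    have hbdd : BddBelow {t : ℝ | 0 < t ∧ (Summable fun n => Φ n (rowSum a (x - y) n / t)) ∧
        (∑' n, Φ n (rowSum a (x - y) n / t)) ≤ 1} := ⟨0, fun t ht => ht.1.le⟩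
    rw [ANorm] at hyn
    obtain ⟨t, ⟨htpos, htsum, -⟩, htlt⟩ := (csInf_lt_iff hbdd hne).mp hyn
    have hle : ∀ n, rowSum a x n ≤ rowSum a (x - y) n + rowSum a y n := by
      intro n
      have h := rowSum_add_le (n := n) (row_summable_sub (hs n) (hsy n)) (hsy n)
      rwa [sub_add_cancel] at h
    have h2 : (0:ℝ) < σ - t := by linarith
    have := summable_phi_of_le hΦ htpos h2 hle htsum (hy (σ - t) h2)
    rwa [show t + (σ - t) = σ from by ring] at this
  -- Part 5: AK property
  · rintro x ⟨hb, hs, hx⟩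
    have hrow_m : ∀ m n k, |a n k| * ‖(x - sect x m) k‖ =
        if k < m then 0 else |a n k| * ‖x k‖ := by
      intro m n k
      by_cases hk : k < m <;> simp [sect, Pi.sub_apply, hk]
    have hrow_le : ∀ m n k, |a n k| * ‖(x - sect x m) k‖ ≤ |a n k| * ‖x k‖ := by
      intro m n k
      rw [hrow_m]
      split_ifs
      · exact row_nonneg a x n k
      · exact le_rfl
    have hsum_row : ∀ m n, Summable fun k => |a n k| * ‖(x - sect x m) k‖ := fun m n =>
      Summable.of_nonneg_of_le (fun k => row_nonneg a _ n k) (hrow_le m n) (hs n)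
    have hT_le : ∀ m n, rowSum a (x - sect x m) n ≤ rowSum a x n := fun m n =>
      Summable.tsum_le_tsum (hrow_le m n) (hsum_row m n) (hs n)
    have hphi_le : ∀ σ, 0 < σ → ∀ m n,
        Φ n (rowSum a (x - sect x m) n / σ) ≤ Φ n (rowSum a x n / σ) := by
      intro σ hσ m n
      apply (hΦ n).monotoneOn
        (Set.mem_Ici.mpr (div_nonneg (rowSum_nonneg a _ n) hσ.le))
        (Set.mem_Ici.mpr (div_nonneg (rowSum_nonneg a x n) hσ.le))
        (by gcongr; exact hT_le m n)
    have hphi_nonneg : ∀ σ, 0 < σ → ∀ m n,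
        0 ≤ Φ n (rowSum a (x - sect x m) n / σ) := fun σ hσ m n =>
      orlicz_nonneg (hΦ n) (div_nonneg (rowSum_nonneg a _ n) hσ.le)
    have hsum_m : ∀ σ, 0 < σ → ∀ m,
        Summable fun n => Φ n (rowSum a (x - sect x m) n / σ) := fun σ hσ m =>
      Summable.of_nonneg_of_le (hphi_nonneg σ hσ m) (hphi_le σ hσ m) (hx σ hσ)
    -- each row sum of the tail tends to 0
    have hTzero : ∀ n, Tendsto (fun m => rowSum a (x - sect x m) n) atTop (𝓝 0) := by
      intro n
      have heq : ∀ m, rowSum a (x - sect x m) n =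
          (∑' k, |a n k| * ‖x k‖) - ∑ k ∈ Finset.range m, |a n k| * ‖x k‖ := by
        intro m
        have hfin : Summable fun k => if k < m then |a n k| * ‖x k‖ else 0 := by
          apply summable_of_ne_finset_zero (s := Finset.range m)
          intro k hk
          rw [Finset.mem_range] at hk
          simp [if_neg hk]
        have htail : Summable fun k => if k < m then 0 else |a n k| * ‖x k‖ :=
          (hsum_row m n).congr fun k => (hrow_m m n k)
        have hdecomp : ∀ k, |a n k| * ‖x k‖ =
            (if k < m then |a n k| * ‖x k‖ else 0) + (if k < m then 0 else |a n k| * ‖x k‖) := by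
          intro k
          split_ifs <;> simp
        have h1 : (∑' k, |a n k| * ‖x k‖) =
            (∑' k, if k < m then |a n k| * ‖x k‖ else 0) +
            ∑' k, if k < m then 0 else |a n k| * ‖x k‖ := by
          rw [← Summable.tsum_add hfin htail]
          exact tsum_congr hdecomp
        have h2 : (∑' k, if k < m then |a n k| * ‖x k‖ else 0) =
            ∑ k ∈ Finset.range m, |a n k| * ‖x k‖ := by
          rw [tsum_eq_sum (s := Finset.range m)]
          · exact Finset.sum_congr rfl fun k hk => if_pos (Finset.mem_range.mp hk)
          · intro k hk
            rw [Finset.mem_range] at hk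
            simp [if_neg hk]
        have h3 : rowSum a (x - sect x m) n =
            ∑' k, if k < m then 0 else |a n k| * ‖x k‖ := tsum_congr (hrow_m m n)
        rw [h3, h1, h2]
        ring
      have hps : Tendsto (fun m => ∑ k ∈ Finset.range m, |a n k| * ‖x k‖) atTop
          (𝓝 (∑' k, |a n k| * ‖x k‖)) := (hs n).hasSum.tendsto_sum_nat
      have hts : Tendsto (fun m => (∑' k, |a n k| * ‖x k‖) -
          ∑ k ∈ Finset.range m, |a n k| * ‖x k‖) atTop
          (𝓝 ((∑' k, |a n k| * ‖x k‖) - ∑' k, |a n k| * ‖x k‖)) :=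
        tendsto_const_nhds.sub hps
      rw [sub_self] at hts
      exact hts.congr fun m => (heq m).symm
    -- the modular of the tail tends to 0, for any σ
    have key : ∀ σ, 0 < σ →
        Tendsto (fun m => ∑' n, Φ n (rowSum a (x - sect x m) n / σ)) atTop (𝓝 0) := by
      intro σ hσ
      have hΦlim : ∀ n, Tendsto (fun m => Φ n (rowSum a (x - sect x m) n / σ)) atTop (𝓝 0) := by
        intro n
        have h1 : Tendsto (fun m => rowSum a (x - sect x m) n / σ) atTop (𝓝 0) := by
          simpa using (hTzero n).div_const σ
        have h2 : Tendsto (fun m => rowSum a (x - sect x m) n / σ) atTop (𝓝[Set.Ici 0] 0) :=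
          tendsto_nhdsWithin_of_tendsto_nhds_of_eventually_within _ h1
            (Filter.Eventually.of_forall fun m => div_nonneg (rowSum_nonneg a _ n) hσ.le)
        have h3 := Filter.Tendsto.comp ((hΦ n).continuousOn 0 Set.self_mem_Ici) h2
        simpa [Function.comp_def, (hΦ n).map_zero] using h3
      have hdom := tendsto_tsum_of_dominated_convergence
        (f := fun m n => Φ n (rowSum a (x - sect x m) n / σ))
        (g := fun _ => (0:ℝ)) (bound := fun n => Φ n (rowSum a x n / σ))
        (hx σ hσ) hΦlim
        (Filter.Eventually.of_forall fun m n => by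
          rw [Real.norm_eq_abs, abs_of_nonneg (hphi_nonneg σ hσ m n)]
          exact hphi_le σ hσ m n)
      simpa using hdom
    -- conclude via the metric characterization
    rw [Metric.tendsto_atTop]
    intro ε hε
    have h2 : (0:ℝ) < ε/2 := by linarith
    have hev : ∀ᶠ m in atTop,
        (∑' n, Φ n (rowSum a (x - sect x m) n / (ε/2))) < 1 :=
      (key (ε/2) h2).eventually_lt_const one_pos
    obtain ⟨N, hN⟩ := eventually_atTop.mp hev
    refine ⟨N, fun m hm => ?_⟩
    have hmem : (ε/2) ∈ {t : ℝ | 0 < t ∧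
        (Summable fun n => Φ n (rowSum a (x - sect x m) n / t)) ∧
        (∑' n, Φ n (rowSum a (x - sect x m) n / t)) ≤ 1} :=
      ⟨h2, hsum_m (ε/2) h2 m, (hN m hm).le⟩
    have hbdd : BddBelow {t : ℝ | 0 < t ∧
        (Summable fun n => Φ n (rowSum a (x - sect x m) n / t)) ∧
        (∑' n, Φ n (rowSum a (x - sect x m) n / t)) ≤ 1} := ⟨0, fun t ht => ht.1.le⟩
    have hle : ANorm Φ a (x - sect x m) ≤ ε/2 := csInf_le hbdd hmem
    have hge : 0 ≤ ANorm Φ a (x - sect x m) :=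
      le_csInf ⟨_, hmem⟩ fun t ht => ht.1.le
    rw [Real.dist_eq, sub_zero, abs_of_nonneg hge]
    linarith
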